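/- arXiv:2312.01551 — 3 statements merged into one kernel-verified Lean document; each statement's English description precedes it below -/
import Mathlib

section
/- Let [n_1, ..., n_i] be a partition of n with dual partition [m_1, ..., m_j], and let [l_1, ..., l_k] be another partition of n. Then [n_1, ..., n_i] dominates [l_1, ..., l_k] (i.e. i ≤ k and n_1 + ... + n_t ≥ l_1 + ... + l_t for all 1 ≤ t ≤ i) if and only if there exists a k × j matrix (a_{s,u}) with entries in {0,1} such that the s-th row sum equals l_s for every 1 ≤ s ≤ k and the u-th column sum equals m_u for every 1 ≤ u ≤ j. -/
open Finset

lemma aux_downclosed {k : ℕ} {S : Finset ℕ} (hS : S ⊆ range k)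
    (hdc : ∀ a b : ℕ, a ≤ b → b ∈ S → a ∈ S) : S = range S.card := by
  have h : ∀ x, x ∈ S ↔ x < S.card := by
    intro x
    constructor
    · intro hx
      have hsub : range (x + 1) ⊆ S := by
        intro y hy
        exact hdc y x (by simpa using Nat.lt_succ_iff.mp (mem_range.mp hy)) hx
      have := card_le_card hsub
      simpa using this
    · intro hx
      by_contra hxS
      have hsub : S ⊆ range x := by
        intro y hy
        rw [mem_range]
        by_contra h'
        exact hxS (hdc x y (le_of_not_gt h') hy)
      have := card_le_card hsub
      simp only [card_range] at this
      omega
  ext x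
  simp [h x, mem_range]

lemma aux_filter_eq_range {k u : ℕ} {f : ℕ → ℕ}
    (hf : ∀ s t, s ≤ t → t < k → f t ≤ f s) :
    (range k).filter (fun s => u ≤ f s)
      = range (((range k).filter (fun s => u ≤ f s)).card) := by
  apply aux_downclosed (filter_subset _ _)
  intro a b hab hb
  simp only [mem_filter, mem_range] at *
  exact ⟨lt_of_le_of_lt hab hb.1, le_trans hb.2 (hf a b hab hb.1)⟩

lemma aux_double (A : Finset ℕ) (u : ℕ) (f : ℕ → ℕ) :
    ∑ v ∈ Icc 1 u, (A.filter (fun s => v ≤ f s)).card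
      = ∑ s ∈ A, min u (f s) := by
  have h1 : ∀ v, (A.filter (fun s => v ≤ f s)).card
      = ∑ s ∈ A, if v ≤ f s then 1 else 0 := by
    intro v; rw [← card_filter]
  simp_rw [h1]
  rw [Finset.sum_comm]
  refine Finset.sum_congr rfl fun s _ => ?_
  rw [← card_filter]
  have : (Icc 1 u).filter (fun v => v ≤ f s) = Icc 1 (min u (f s)) := by
    ext v; simp only [mem_filter, mem_Icc]; omega
  rw [this, Nat.card_Icc]
  omega

lemma aux_select (A : Finset ℕ) (f : ℕ → ℕ) :
    ∀ c, c ≤ A.card → ∃ T, T ⊆ A ∧ T.card = c ∧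
      ∀ x ∈ T, ∀ y ∈ A, y ∉ T → f y ≤ f x := by
  intro c
  induction c with
  | zero => exact fun _ => ⟨∅, empty_subset _, card_empty, by simp⟩
  | succ c ihc =>
    intro hc
    obtain ⟨T, hTA, hTc, hmax⟩ := ihc (by omega)
    have hne : (A \ T).Nonempty := by
      rw [← card_pos, card_sdiff_of_subset hTA]
      omega
    obtain ⟨y, hy, hymax⟩ := Finset.exists_max_image (A \ T) f hne
    have hyA : y ∈ A := (mem_sdiff.mp hy).1
    have hyT : y ∉ T := (mem_sdiff.mp hy).2
    refine ⟨insert y T, ?_, ?_, ?_⟩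
    · exact insert_subset hyA hTA
    · rw [card_insert_of_notMem hyT, hTc]
    · intro x hx z hz hzT
      have hzT' : z ∉ T := fun h => hzT (mem_insert_of_mem h)
      rcases mem_insert.mp hx with rfl | hxT
      · exact hymax z (mem_sdiff.mpr ⟨hz, hzT'⟩)
      · exact hmax x hxT z hz hzT'

lemma aux_shift (t : ℕ) (N : ℕ → ℕ) :
    ∑ v ∈ Icc 1 t, N (v-1) = ∑ s ∈ range t, N s := by
  induction t with
  | zero => simp
  | succ t ih =>
    rw [Finset.sum_Icc_succ_top (by omega : 1 ≤ t + 1), ih, Finset.sum_range_succ]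
    simp


lemma auxGR : ∀ (j k : ℕ) (m r : ℕ → ℕ),
    (∀ u v, 1 ≤ u → u ≤ v → v ≤ j → m v ≤ m u) →
    (∀ u, u ≤ j → ∑ v ∈ Icc 1 u, m v ≤ ∑ s ∈ range k, min u (r s)) →
    (∑ v ∈ Icc 1 j, m v = ∑ s ∈ range k, r s) →
    ∃ a : ℕ → ℕ → ℕ, (∀ s u, a s u ≤ 1) ∧
      (∀ s, s < k → ∑ u ∈ Icc 1 j, a s u = r s) ∧
      (∀ u, 1 ≤ u → u ≤ j → ∑ s ∈ range k, a s u = m u) := by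
  intro j
  induction j with
  | zero =>
    intro k m r _ _ htot
    refine ⟨fun _ _ => 0, fun _ _ => by simp, ?_, fun u h1 h0 => absurd h0 (by omega)⟩
    intro s hs
    have h0 : ∑ s ∈ range k, r s = 0 := by
      rw [← htot]; simp
    have := (Finset.sum_eq_zero_iff.mp h0) s (mem_range.mpr hs)
    simp [this]
  | succ j ih =>
    intro k m r hmono hdom htot
    -- m (j+1) ≤ k
    have hm1 : m 1 ≤ k := by
      have h1 := hdom 1 (by omega)
      have : ∑ v ∈ Icc 1 1, m v = m 1 := by simp
      rw [this] at h1
      calc m 1 ≤ ∑ s ∈ range k, min 1 (r s) := h1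
        _ ≤ ∑ s ∈ range k, 1 := Finset.sum_le_sum fun s _ => by omega
        _ = k := by simp
    have hmj1' : m (j+1) ≤ m 1 := by
      rcases Nat.lt_or_ge 1 (j+1) with h | h
      · exact hmono 1 (j+1) le_rfl (by omega) le_rfl
      · have h1 : j + 1 = 1 := by omega
        rw [h1]
    have hmj1 : m (j+1) ≤ k := le_trans hmj1' hm1
    -- select top rows
    obtain ⟨T, hTA, hTc, hmax⟩ := aux_select (range k) r (m (j+1))
      (by rw [card_range]; exact hmj1)
    -- rows in T have positive r
    have hTpos : ∀ s ∈ T, 1 ≤ r s := by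
      by_contra hcon
      push_neg at hcon
      obtain ⟨s0, hs0T, hs0⟩ := hcon
      have hs0r : r s0 = 0 := by omega
      have hbound : ∀ s ∈ range k, min 1 (r s) ≤ if s ∈ T.erase s0 then 1 else 0 := by
        intro s hs
        by_cases hsT : s ∈ T.erase s0
        · simp only [hsT, if_true]; omega
        · simp only [hsT, if_false]
          rcases eq_or_ne s s0 with rfl | hne
          · omega
          · by_cases hsT2 : s ∈ T
            · exact absurd (mem_erase.mpr ⟨hne, hsT2⟩) hsT
            · have := hmax s0 hs0T s hs hsT2
              omega
      have hsum : ∑ s ∈ range k, min 1 (r s) ≤ (T.erase s0).card := by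
        calc ∑ s ∈ range k, min 1 (r s)
            ≤ ∑ s ∈ range k, (if s ∈ T.erase s0 then 1 else 0) :=
              Finset.sum_le_sum hbound
          _ = ∑ s ∈ range k ∩ T.erase s0, 1 := by rw [Finset.sum_ite_mem]
          _ = (T.erase s0).card := by
              rw [Finset.inter_eq_right.mpr
                (le_trans (erase_subset _ _) hTA)]
              simp
      have hcard : (T.erase s0).card = m (j+1) - 1 := by
        rw [card_erase_of_mem hs0T, hTc]
      have h1 := hdom 1 (by omega)
      have heq : ∑ v ∈ Icc 1 1, m v = m 1 := by simp
      rw [heq] at h1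
      have hjm : m (j+1) ≤ m 1 := by
        rcases Nat.lt_or_ge 1 (j+1) with h | h
        · exact hmono 1 (j+1) le_rfl (by omega) le_rfl
        · have : j + 1 = 1 := by omega
          rw [this]
      have hTne : 1 ≤ m (j+1) := by
        have : 0 < T.card := card_pos.mpr ⟨s0, hs0T⟩
        omega
      omega
    -- the reduced row sums
    set r' : ℕ → ℕ := fun s => r s - (if s ∈ T then 1 else 0) with hr'
    have hsplit : ∀ s ∈ range k, r s = r' s + (if s ∈ T then 1 else 0) := by
      intro s hs
      by_cases hsT : s ∈ T
      · have := hTpos s hsT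
        simp [hr', hsT]; omega
      · simp [hr', hsT]
    have hindic : ∀ (B : Finset ℕ), T ⊆ B → ∑ s ∈ B, (if s ∈ T then 1 else 0) = m (j+1) := by
      intro B hB
      rw [Finset.sum_ite_mem, Finset.inter_eq_right.mpr hB, ← hTc]
      simp
    have htot' : ∑ v ∈ Icc 1 j, m v = ∑ s ∈ range k, r' s := by
      have h1 : ∑ v ∈ Icc 1 (j+1), m v = ∑ v ∈ Icc 1 j, m v + m (j+1) := by
        rw [← Finset.sum_Icc_succ_top (by omega : 1 ≤ j + 1)]
      have h2 : ∑ s ∈ range k, r s = ∑ s ∈ range k, r' s + m (j+1) := by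
        rw [← hindic (range k) hTA, ← Finset.sum_add_distrib]
        exact Finset.sum_congr rfl hsplit
      omega
    -- the reduced dominance condition
    have hdom' : ∀ u, u ≤ j → ∑ v ∈ Icc 1 u, m v ≤ ∑ s ∈ range k, min u (r' s) := by
      intro u hu
      rcases Nat.eq_zero_or_pos u with rfl | hu1
      · simp
      by_cases hc : ∃ s ∈ T, r s ≤ u
      · obtain ⟨s0, hs0T, hs0⟩ := hc
        have hout : ∀ s ∈ range k, s ∉ T → r s ≤ u :=
          fun s hs hsT => le_trans (hmax s0 hs0T s hs hsT) hs0
        have hkey : ∀ s ∈ range k,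
            min (u+1) (r s) ≤ min u (r' s) + (if s ∈ T then 1 else 0) := by
          intro s hs
          by_cases hsT : s ∈ T
          · simp only [hr', hsT, if_true]; omega
          · have := hout s hs hsT
            simp only [hr', hsT, if_false]; omega
        have hsum2 : ∑ s ∈ range k, min (u+1) (r s)
            ≤ ∑ s ∈ range k, min u (r' s) + m (j+1) := by
          calc ∑ s ∈ range k, min (u+1) (r s)
              ≤ ∑ s ∈ range k, (min u (r' s) + (if s ∈ T then 1 else 0)) :=
                Finset.sum_le_sum hkey
            _ = ∑ s ∈ range k, min u (r' s) + m (j+1) := by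
                rw [Finset.sum_add_distrib, hindic (range k) hTA]
        have hd := hdom (u+1) (by omega)
        have hIcc : ∑ v ∈ Icc 1 (u+1), m v = ∑ v ∈ Icc 1 u, m v + m (u+1) := by
          rw [← Finset.sum_Icc_succ_top (by omega : 1 ≤ u + 1)]
        have hmm : m (j+1) ≤ m (u+1) := by
          rcases Nat.eq_or_lt_of_le (by omega : u + 1 ≤ j + 1) with h | h
          · rw [h]
          · exact hmono (u+1) (j+1) (by omega) (by omega) le_rfl
        omega
      · push_neg at hc
        have : ∑ s ∈ range k, min u (r' s) = ∑ s ∈ range k, min u (r s) := by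
          refine Finset.sum_congr rfl fun s _ => ?_
          by_cases hsT : s ∈ T
          · have := hc s hsT
            simp only [hr', hsT, if_true]; omega
          · simp [hr', hsT]
        rw [this]
        exact hdom u (by omega)
    obtain ⟨a', h01', hrow', hcol'⟩ := ih k m r'
      (fun u v hu huv hv => hmono u v hu huv (by omega)) hdom' htot'
    refine ⟨fun s u => if u = j+1 then (if s ∈ T then 1 else 0) else a' s u,
      ?_, ?_, ?_⟩
    · intro s u
      by_cases h : u = j+1 <;> by_cases h2 : s ∈ T <;> simp [h, h2, h01' s u]
    · intro s hs
      rw [Finset.sum_Icc_succ_top (by omega : 1 ≤ j + 1)]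
      have h1 : ∑ u ∈ Icc 1 j, (if u = j+1 then (if s ∈ T then 1 else 0) else a' s u)
          = ∑ u ∈ Icc 1 j, a' s u := by
        refine Finset.sum_congr rfl fun u hu => ?_
        have : u ≠ j + 1 := by
          have := (mem_Icc.mp hu).2; omega
        simp [this]
      rw [h1, hrow' s hs]
      simp only [if_pos rfl]
      exact (hsplit s (mem_range.mpr hs)).symm
    · intro u hu1 hu2
      by_cases h : u = j+1
      · subst h
        simp only [if_pos rfl]
        exact hindic (range k) hTA
      · have : u ≤ j := by omega
        calc ∑ s ∈ range k, (if u = j+1 then (if s ∈ T then 1 else 0) else a' s u)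
            = ∑ s ∈ range k, a' s u := Finset.sum_congr rfl fun s _ => by simp [h]
          _ = m u := hcol' u hu1 this

lemma aux_claim (i k n u : ℕ) (N L : ℕ → ℕ) (hik : i ≤ k)
    (hLanti : ∀ s t, s ≤ t → t < k → L t ≤ L s)
    (hNsum : ∑ s ∈ range i, N s = n) (hLsum : ∑ s ∈ range k, L s = n)
    (hdom : ∀ t, t ≤ i → ∑ s ∈ range t, L s ≤ ∑ s ∈ range t, N s) :
    ∑ s ∈ range i, min u (N s) ≤ ∑ s ∈ range k, min u (L s) := by
  set t := ((range k).filter (fun s => u ≤ L s)).card with ht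
  have hfe : (range k).filter (fun s => u ≤ L s) = range t := aux_filter_eq_range hLanti
  have htk : t ≤ k := by
    rw [ht]
    calc ((range k).filter (fun s => u ≤ L s)).card
        ≤ (range k).card := card_le_card (filter_subset _ _)
      _ = k := card_range k
  have hL1 : ∀ s, s < t → min u (L s) = u := by
    intro s hs
    have : s ∈ (range k).filter (fun s => u ≤ L s) := by
      rw [hfe]; exact mem_range.mpr hs
    have := (mem_filter.mp this).2
    omega
  have hL2 : ∀ s, t ≤ s → s < k → min u (L s) = L s := by
    intro s hst hsk
    have : s ∉ (range k).filter (fun s => u ≤ L s) := by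
      rw [hfe]; simp; omega
    simp only [mem_filter, mem_range, not_and, not_le] at this
    have := this hsk
    omega
  rcases Nat.lt_or_ge i t with hit | hti
  · -- i < t : pointwise comparison suffices
    calc ∑ s ∈ range i, min u (N s)
        ≤ ∑ s ∈ range i, min u (L s) := by
          refine Finset.sum_le_sum fun s hs => ?_
          rw [hL1 s (lt_of_lt_of_le (mem_range.mp hs) (le_of_lt hit))]
          omega
      _ ≤ ∑ s ∈ range k, min u (L s) :=
          Finset.sum_le_sum_of_subset (range_subset_range.mpr hik)
  · -- t ≤ i
    have f3 : ∑ s ∈ range i, min u (N s)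
        = ∑ s ∈ range t, min u (N s) + ∑ s ∈ Ico t i, min u (N s) := by
      simp only [range_eq_Ico]
      exact (Finset.sum_Ico_consecutive _ (Nat.zero_le t) hti).symm
    have f4 : ∑ s ∈ range k, min u (L s)
        = ∑ s ∈ range t, min u (L s) + ∑ s ∈ Ico t k, min u (L s) := by
      simp only [range_eq_Ico]
      exact (Finset.sum_Ico_consecutive _ (Nat.zero_le t) htk).symm
    have f6 : ∑ s ∈ range t, N s + ∑ s ∈ Ico t i, N s = n := by
      simp only [range_eq_Ico]
      rw [Finset.sum_Ico_consecutive _ (Nat.zero_le t) hti, ← range_eq_Ico, hNsum]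
    have f7 : ∑ s ∈ range t, L s + ∑ s ∈ Ico t k, L s = n := by
      simp only [range_eq_Ico]
      rw [Finset.sum_Ico_consecutive _ (Nat.zero_le t) htk, ← range_eq_Ico, hLsum]
    have f1 : ∑ s ∈ range t, min u (N s) ≤ ∑ s ∈ range t, min u (L s) := by
      refine Finset.sum_le_sum fun s hs => ?_
      rw [hL1 s (mem_range.mp hs)]; omega
    have f2 : ∑ s ∈ Ico t i, min u (N s) ≤ ∑ s ∈ Ico t i, N s :=
      Finset.sum_le_sum fun s _ => min_le_right _ _
    have f5 : ∑ s ∈ Ico t k, min u (L s) = ∑ s ∈ Ico t k, L s := by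
      refine Finset.sum_congr rfl fun s hs => ?_
      have := mem_Ico.mp hs
      exact hL2 s this.1 this.2
    have f8 : ∑ s ∈ range t, L s ≤ ∑ s ∈ range t, N s := hdom t hti
    omega


/-- Dominance is characterized by 0/1 matrices.  A partition of `n` with `i`
parts is encoded as `N : ℕ → ℕ`, weakly decreasing and positive on `[0, i)`
with `∑_{s<i} N s = n`; its largest part is `N 0` and its dual partition has
parts `m u = #{s < i : u ≤ N s}` for `1 ≤ u ≤ N 0`.  Then `[N] ≻ [L]`
(dominance) holds iff there is a `k × (N 0)` matrix with entries in `{0,1}`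
whose row sums are the parts of `L` and whose column sums are the parts of the
dual partition of `[N]`. -/
theorem stmt_1 (n i k : ℕ) (hn : 0 < n) (hi : 0 < i) (hk : 0 < k)
    (N L : ℕ → ℕ)
    (hNanti : ∀ s t, s ≤ t → t < i → N t ≤ N s) (hNpos : ∀ s, s < i → 0 < N s)
    (hNsum : ∑ s ∈ Finset.range i, N s = n)
    (hLanti : ∀ s t, s ≤ t → t < k → L t ≤ L s) (hLpos : ∀ s, s < k → 0 < L s)
    (hLsum : ∑ s ∈ Finset.range k, L s = n) :
    (i ≤ k ∧ ∀ t, t ≤ i →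
        ∑ s ∈ Finset.range t, L s ≤ ∑ s ∈ Finset.range t, N s) ↔
    (∃ a : ℕ → ℕ → ℕ,
      (∀ s u, s < k → 1 ≤ u → u ≤ N 0 → a s u ≤ 1) ∧
      (∀ s, s < k → ∑ u ∈ Finset.Icc 1 (N 0), a s u = L s) ∧
      (∀ u, 1 ≤ u → u ≤ N 0 → ∑ s ∈ Finset.range k, a s u =
        ((Finset.range i).filter (fun s => u ≤ N s)).card)) := by
  set m : ℕ → ℕ := fun u => ((range i).filter (fun s => u ≤ N s)).card with hm
  have hN0 : 1 ≤ N 0 := hNpos 0 hi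
  constructor
  · rintro ⟨hik, hdom⟩
    have hdc : ∀ u, ∑ v ∈ Icc 1 u, m v = ∑ s ∈ range i, min u (N s) :=
      fun u => aux_double (range i) u N
    have hmtot : ∑ v ∈ Icc 1 (N 0), m v = n := by
      rw [hdc, ← hNsum]
      refine Finset.sum_congr rfl fun s hs => ?_
      have := hNanti 0 s (Nat.zero_le s) (mem_range.mp hs)
      omega
    have hmono : ∀ u v, 1 ≤ u → u ≤ v → v ≤ N 0 → m v ≤ m u := by
      intro u v _ huv _
      exact card_le_card (Finset.monotone_filter_right _ fun x _ hx => le_trans huv hx)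
    have hdomGR : ∀ u, u ≤ N 0 →
        ∑ v ∈ Icc 1 u, m v ≤ ∑ s ∈ range k, min u (L s) := by
      intro u _
      rw [hdc]
      exact aux_claim i k n u N L hik hLanti hNsum hLsum hdom
    obtain ⟨a, h1, h2, h3⟩ := auxGR (N 0) k m L hmono hdomGR (by rw [hmtot, hLsum])
    exact ⟨a, fun s u _ _ _ => h1 s u, h2, fun u hu1 hu2 => h3 u hu1 hu2⟩
  · rintro ⟨a, h01, hrow, hcol⟩
    have hcol' : ∀ u, 1 ≤ u → u ≤ N 0 → ∑ s ∈ range k, a s u = m u := hcol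
    have hm1 : m 1 = i := by
      have hfl : (range i).filter (fun s => 1 ≤ N s) = range i :=
        filter_true_of_mem fun s hs => hNpos s (mem_range.mp hs)
      rw [hm]
      simp only
      rw [hfl, card_range]
    have hik : i ≤ k := by
      have h := hcol' 1 le_rfl hN0
      have hle : ∑ s ∈ range k, a s 1 ≤ ∑ s ∈ range k, 1 :=
        Finset.sum_le_sum fun s hs => h01 s 1 (mem_range.mp hs) le_rfl hN0
      simp only [Finset.sum_const, card_range, smul_eq_mul, mul_one] at hle
      omega
    refine ⟨hik, ?_⟩
    intro t hti
    have htk : t ≤ k := le_trans hti hik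
    have step1 : ∑ s ∈ range t, L s = ∑ s ∈ range t, ∑ u ∈ Icc 1 (N 0), a s u :=
      Finset.sum_congr rfl fun s hs =>
        (hrow s (lt_of_lt_of_le (mem_range.mp hs) htk)).symm
    rw [step1, Finset.sum_comm]
    have step2 : ∀ u ∈ Icc 1 (N 0), ∑ s ∈ range t, a s u ≤ min t (m u) := by
      intro u hu
      obtain ⟨hu1, hu2⟩ := mem_Icc.mp hu
      have hA : ∑ s ∈ range t, a s u ≤ t := by
        calc ∑ s ∈ range t, a s u
            ≤ ∑ s ∈ range t, 1 := Finset.sum_le_sum fun s hs =>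
              h01 s u (lt_of_lt_of_le (mem_range.mp hs) htk) hu1 hu2
          _ = t := by simp
      have hB : ∑ s ∈ range t, a s u ≤ m u := by
        rw [← hcol' u hu1 hu2]
        exact Finset.sum_le_sum_of_subset (range_subset_range.mpr htk)
      omega
    calc ∑ u ∈ Icc 1 (N 0), ∑ s ∈ range t, a s u
        ≤ ∑ u ∈ Icc 1 (N 0), min t (m u) := Finset.sum_le_sum step2
      _ = ∑ v ∈ Icc 1 t, ((Icc 1 (N 0)).filter (fun u => v ≤ m u)).card :=
          (aux_double _ _ _).symm
      _ = ∑ v ∈ Icc 1 t, N (v-1) := by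
          refine Finset.sum_congr rfl fun v hv => ?_
          obtain ⟨hv1, hv2⟩ := mem_Icc.mp hv
          have hfil : (Icc 1 (N 0)).filter (fun u => v ≤ m u) = Icc 1 (N (v-1)) := by
            ext u
            simp only [mem_filter, mem_Icc]
            constructor
            · rintro ⟨⟨hu1, hu2⟩, hvm⟩
              refine ⟨hu1, ?_⟩
              have hfr := aux_filter_eq_range (k := i) (u := u) (f := N) hNanti
              have hmu : ((range i).filter (fun s => u ≤ N s)).card = m u := rfl
              have hmem : v - 1 ∈ (range i).filter (fun s => u ≤ N s) := by
                rw [hfr]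
                exact mem_range.mpr (by omega)
              exact (mem_filter.mp hmem).2
            · rintro ⟨hu1, huN⟩
              have hvi : v - 1 < i := by omega
              have hu2 : u ≤ N 0 := le_trans huN (hNanti 0 (v-1) (Nat.zero_le _) hvi)
              refine ⟨⟨hu1, hu2⟩, ?_⟩
              have hfr := aux_filter_eq_range (k := i) (u := u) (f := N) hNanti
              have hmem : v - 1 ∈ (range i).filter (fun s => u ≤ N s) :=
                mem_filter.mpr ⟨mem_range.mpr hvi, huN⟩
              have hmu : ((range i).filter (fun s => u ≤ N s)).card = m u := rfl
              rw [hfr] at hmem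
              have := mem_range.mp hmem
              omega
          rw [hfil, Nat.card_Icc]
          omega
      _ = ∑ s ∈ range t, N s := aux_shift t N
end

section
/- Let n_1, ..., n_k be positive integers and for each 1 ≤ i ≤ k let τ_i and σ_i be partitions of n_i. Suppose τ_i dominates σ_i for every i, and suppose the concatenations (disjoint unions as multisets) τ_1 ⊔ τ_2 ⊔ ... ⊔ τ_k and σ_1 ⊔ σ_2 ⊔ ... ⊔ σ_k are equal as partitions of n_1 + ... + n_k. Then τ_i = σ_i for every 1 ≤ i ≤ k. -/
open Finset

lemma msum_map {α : Type*} (s : Finset α) (f : ℕ → ℕ) (c : α → Multiset ℕ) :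
    ((∑ i ∈ s, c i).map f).sum = ∑ i ∈ s, ((c i).map f).sum := by
  classical
  induction s using Finset.induction with
  | empty => simp
  | @insert a s h ih => simp [Finset.sum_insert h, ih]
open Finset

lemma sum_range_getD (l : List ℕ) (m : ℕ) :
    ∑ j ∈ range m, l.getD j 0 = (l.take m).sum := by
  induction m with
  | zero => simp
  | succ m ih =>
    rw [Finset.sum_range_succ, ih]
    rcases lt_or_ge m l.length with h | h
    · rw [List.sum_take_succ _ _ h, List.getD_eq_getElem _ _ h]
    · rw [List.getD_eq_default _ _ h, List.take_of_length_le h,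
        List.take_of_length_le (le_trans h (Nat.le_succ m)), Nat.add_zero]

lemma getD_antitone {l : List ℕ} (hs : l.Pairwise (· ≥ ·)) :
    Antitone (fun j => l.getD j 0) := by
  intro i j hij
  show l.getD j 0 ≤ l.getD i 0
  rcases lt_or_ge j l.length with hj | hj
  · have hi : i < l.length := lt_of_le_of_lt hij hj
    simp only [List.getD_eq_getElem _ _ hj, List.getD_eq_getElem _ _ hi]
    rcases eq_or_lt_of_le hij with rfl | h
    · rfl
    · exact hs.rel_get_of_lt (a := ⟨i, hi⟩) (b := ⟨j, hj⟩) h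
  · rw [List.getD_eq_default _ _ hj]
    exact Nat.zero_le _

lemma abel_identity (f g : ℕ → ℤ) (q : ℕ) :
    ∑ j ∈ range q, f j * g j =
      ∑ j ∈ range q, (∑ i ∈ range (j+1), f i) * (g j - g (j+1))
        + (∑ i ∈ range q, f i) * g q := by
  induction q with
  | zero => simp
  | succ q ih =>
    rw [Finset.sum_range_succ, ih,
      Finset.sum_range_succ (fun j => (∑ i ∈ range (j+1), f i) * (g j - g (j+1))),
      Finset.sum_range_succ f]
    ring

lemma const_of_no_drop (t : ℕ → ℕ) (a : ℕ) :
    ∀ n : ℕ, (∀ j, a ≤ j → j < a + n → t j = t (j+1)) → t a = t (a+n) := by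
  intro n
  induction n with
  | zero => intro _; rfl
  | succ n ih =>
    intro h
    rw [ih (fun j hja hjn => h j hja (by omega)), ← Nat.add_assoc]
    exact h (a+n) (by omega) (by omega)

lemma sum_range_getD_map (l : List ℕ) (m : ℕ) (hm : l.length ≤ m) :
    ∑ j ∈ range m, (l.getD j 0) * (l.getD j 0) = (l.map (fun x => x*x)).sum := by
  have h1 := sum_range_getD (l.map (fun x => x*x)) m
  rw [List.take_of_length_le (by simpa using hm)] at h1
  rw [← h1]
  apply Finset.sum_congr rfl
  intro j _
  rcases lt_or_ge j l.length with h | h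
  · rw [List.getD_eq_getElem _ _ h, List.getD_eq_getElem _ _ (by simpa using h),
      List.getElem_map]
  · rw [List.getD_eq_default _ _ h, List.getD_eq_default _ _ (by simpa using h)]

lemma key_strict {l₁ l₂ : List ℕ} (h1s : l₁.Pairwise (· ≥ ·))
    (h2s : l₂.Pairwise (· ≥ ·)) (h2p : ∀ x ∈ l₂, 0 < x)
    (hsum : l₁.sum = l₂.sum) (hlen : l₁.length ≤ l₂.length)
    (hdom : ∀ m, m ≤ l₁.length → (l₂.take m).sum ≤ (l₁.take m).sum)
    (hne : l₁ ≠ l₂) :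
    (l₂.map (fun x => x * x)).sum < (l₁.map (fun x => x * x)).sum := by
  classical
  set p := l₁.length with hp
  set q := l₂.length with hq
  set t : ℕ → ℕ := fun j => l₁.getD j 0 with ht
  set s : ℕ → ℕ := fun j => l₂.getD j 0 with hs
  have tant : Antitone t := getD_antitone h1s
  have sant : Antitone s := getD_antitone h2s
  have hT : ∀ m, ∑ j ∈ range m, t j = (l₁.take m).sum := fun m => sum_range_getD l₁ m
  have hS : ∀ m, ∑ j ∈ range m, s j = (l₂.take m).sum := fun m => sum_range_getD l₂ m
  have hST : ∀ m, ∑ j ∈ range m, s j ≤ ∑ j ∈ range m, t j := by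
    intro m
    rw [hT, hS]
    rcases le_or_gt m p with h | h
    · exact hdom m h
    · rw [List.take_of_length_le (le_of_lt h), hsum]
      calc (l₂.take m).sum ≤ (l₂.take m).sum + (l₂.drop m).sum := Nat.le_add_right _ _
        _ = l₂.sum := List.sum_take_add_sum_drop _ _
  have htzero : ∀ j, p ≤ j → t j = 0 := fun j hj => List.getD_eq_default _ _ hj
  have hszero : ∀ j, q ≤ j → s j = 0 := fun j hj => List.getD_eq_default _ _ hj
  have hex : ∃ j, t j ≠ s j := by
    by_contra hcon
    push_neg at hcon
    apply hne
    have hpq : p = q := by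
      by_contra hpq
      have hplt : p < q := lt_of_le_of_ne hlen hpq
      have h0 : s p = 0 := by rw [← hcon p]; exact htzero p le_rfl
      have hmem : l₂.getD p 0 ∈ l₂ := by
        rw [List.getD_eq_getElem _ _ hplt]; exact List.getElem_mem _
      have := h2p _ hmem
      simp only [hs] at h0
      omega
    apply List.ext_getElem hpq
    intro n h₁ h₂
    rw [← List.getD_eq_getElem l₁ 0 h₁, ← List.getD_eq_getElem l₂ 0 h₂]
    exact hcon n
  set a := Nat.find hex with ha'
  have ha : t a ≠ s a := Nat.find_spec hex
  have hamin : ∀ j, j < a → t j = s j := by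
    intro j hj
    have := Nat.find_min hex hj
    push_neg at this
    exact this
  have haq : a < q := by
    by_contra h
    push_neg at h
    exact ha (by rw [htzero a (le_trans hlen h), hszero a h])
  have hTSa : ∑ j ∈ range a, t j = ∑ j ∈ range a, s j :=
    Finset.sum_congr rfl fun j hj => hamin j (mem_range.mp hj)
  have hta : s a < t a := by
    have h1 := hST (a+1)
    rw [Finset.sum_range_succ, Finset.sum_range_succ, hTSa] at h1
    omega
  have hDa : ∑ j ∈ range (a+1), s j < ∑ j ∈ range (a+1), t j := by
    rw [Finset.sum_range_succ, Finset.sum_range_succ, hTSa]; omega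
  have htot : ∑ j ∈ range q, t j = ∑ j ∈ range q, s j := by
    rw [hT, hS, List.take_of_length_le hlen, List.take_of_length_le le_rfl, hsum]
  have hw : a < q - 1 ∧ ∑ i ∈ range (q-1+1), t i = ∑ i ∈ range (q-1+1), s i := by
    constructor
    · by_contra h
      push_neg at h
      have hq1 : a + 1 = q := by omega
      rw [hq1] at hDa
      omega
    · rw [Nat.sub_add_cancel (show 1 ≤ q by omega)]
      exact htot
  have hexb : ∃ j, a < j ∧ ∑ i ∈ range (j+1), t i = ∑ i ∈ range (j+1), s i := ⟨q-1, hw⟩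
  set b := Nat.find hexb with hb'
  have hb : a < b ∧ ∑ i ∈ range (b+1), t i = ∑ i ∈ range (b+1), s i := Nat.find_spec hexb
  have hbq : b ≤ q - 1 := Nat.find_le hw
  have hbmin : ∀ j, a ≤ j → j < b → ∑ i ∈ range (j+1), s i < ∑ i ∈ range (j+1), t i := by
    intro j hja hjb
    rcases eq_or_lt_of_le hja with rfl | h
    · exact hDa
    · have h2 := Nat.find_min hexb hjb
      push_neg at h2
      have hne' := h2 h
      have hle := hST (j+1)
      omega
  have hsb : t b < s b := by
    have h1 : ∑ i ∈ range b, s i < ∑ i ∈ range b, t i := by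
      have h3 := hbmin (b-1) (by omega) (by omega)
      rwa [Nat.sub_add_cancel (show 1 ≤ b by omega)] at h3
    have h2 := hb.2
    rw [Finset.sum_range_succ, Finset.sum_range_succ] at h2
    omega
  have htab : t b < t a := by
    have := sant (le_of_lt hb.1)
    omega
  have hdrop : ∃ j, a ≤ j ∧ j < b ∧ t (j+1) < t j := by
    by_contra hcon
    push_neg at hcon
    have heq : t a = t (a + (b - a)) :=
      const_of_no_drop t a (b - a) (fun j hja hjb =>
        le_antisymm (hcon j hja (by omega)) (tant (Nat.le_succ j)))
    rw [show a + (b - a) = b by omega] at heq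
    omega
  obtain ⟨j₀, hj0a, hj0b, hj0⟩ := hdrop
  have key : (∑ j ∈ range q, (s j : ℤ) * s j) < ∑ j ∈ range q, (t j : ℤ) * t j := by
    have hid := abel_identity (fun j => (t j : ℤ) - s j) (fun j => (t j : ℤ) + s j) q
    have hlast : (∑ i ∈ range q, ((t i : ℤ) - s i)) = 0 := by
      rw [Finset.sum_sub_distrib, ← Nat.cast_sum, ← Nat.cast_sum, htot, sub_self]
    have hpos : 0 < ∑ j ∈ range q,
        (∑ i ∈ range (j+1), ((t i : ℤ) - s i)) *
          (((t j : ℤ) + s j) - ((t (j+1) : ℤ) + s (j+1))) := by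
      apply Finset.sum_pos'
      · intro j _
        apply mul_nonneg
        · rw [Finset.sum_sub_distrib, sub_nonneg, ← Nat.cast_sum, ← Nat.cast_sum,
            Nat.cast_le]
          exact hST (j+1)
        · have h1 : t (j+1) ≤ t j := tant (Nat.le_succ j)
          have h2 : s (j+1) ≤ s j := sant (Nat.le_succ j)
          have : (t (j+1) : ℤ) ≤ t j := Nat.cast_le.mpr h1
          have : (s (j+1) : ℤ) ≤ s j := Nat.cast_le.mpr h2
          linarith
      · refine ⟨j₀, mem_range.mpr (by omega), ?_⟩
        apply mul_pos
        · rw [Finset.sum_sub_distrib, sub_pos, ← Nat.cast_sum, ← Nat.cast_sum,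
            Nat.cast_lt]
          exact hbmin j₀ hj0a hj0b
        · have h2 : s (j₀+1) ≤ s j₀ := sant (Nat.le_succ j₀)
          have h3 : (t (j₀+1) : ℤ) < t j₀ := Nat.cast_lt.mpr hj0
          have : (s (j₀+1) : ℤ) ≤ s j₀ := Nat.cast_le.mpr h2
          linarith
    have hexp : ∑ j ∈ range q, ((t j : ℤ) - s j) * ((t j : ℤ) + s j)
        = ∑ j ∈ range q, (t j : ℤ) * t j - ∑ j ∈ range q, (s j : ℤ) * s j := by
      rw [← Finset.sum_sub_distrib]
      exact Finset.sum_congr rfl fun j _ => by ring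
    rw [hexp, hlast, zero_mul, add_zero] at hid
    linarith
  have keyn : (∑ j ∈ range q, s j * s j) < ∑ j ∈ range q, t j * t j := by
    have h1 : ((∑ j ∈ range q, s j * s j : ℕ) : ℤ) < ((∑ j ∈ range q, t j * t j : ℕ) : ℤ) := by
      push_cast
      exact key
    exact_mod_cast h1
  rwa [sum_range_getD_map l₁ q hlen, sum_range_getD_map l₂ q le_rfl] at keyn

/-- If `τᵢ` and `σᵢ` are partitions of `nᵢ` (encoded as weakly decreasing lists of
positive naturals with sum `nᵢ`), `τᵢ` dominates `σᵢ` for every `i`, and the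
concatenations (as multisets) `τ₁ ⊔ ⋯ ⊔ τₖ` and `σ₁ ⊔ ⋯ ⊔ σₖ` coincide, then
`τᵢ = σᵢ` for every `i`. -/
theorem stmt_2 (k : ℕ) (nvec : Fin k → ℕ) (hn : ∀ i, 0 < nvec i)
    (τ σ : Fin k → List ℕ)
    (hτsort : ∀ i, (τ i).Pairwise (· ≥ ·)) (hτpos : ∀ i, ∀ x ∈ τ i, 0 < x)
    (hτsum : ∀ i, (τ i).sum = nvec i)
    (hσsort : ∀ i, (σ i).Pairwise (· ≥ ·)) (hσpos : ∀ i, ∀ x ∈ σ i, 0 < x)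
    (hσsum : ∀ i, (σ i).sum = nvec i)
    (hdom : ∀ i, (τ i).length ≤ (σ i).length ∧
      ∀ t, t ≤ (τ i).length → ((σ i).take t).sum ≤ ((τ i).take t).sum)
    (hconcat : (∑ i, ((τ i : Multiset ℕ))) = ∑ i, ((σ i : Multiset ℕ))) :
    ∀ i, τ i = σ i := by
  by_contra hcon
  push_neg at hcon
  obtain ⟨i₀, hi₀⟩ := hcon
  have hsq : ∑ i, ((τ i).map (fun x => x*x)).sum = ∑ i, ((σ i).map (fun x => x*x)).sum := by
    have h2 := congrArg (fun M : Multiset ℕ => (M.map (fun x => x*x)).sum) hconcat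
    simp only [msum_map] at h2
    simpa only [Multiset.map_coe, Multiset.sum_coe] using h2
  have hlt : ∑ i, ((σ i).map (fun x => x*x)).sum < ∑ i, ((τ i).map (fun x => x*x)).sum := by
    apply Finset.sum_lt_sum
    · intro i _
      rcases eq_or_ne (τ i) (σ i) with h | h
      · rw [h]
      · exact le_of_lt (key_strict (hτsort i) (hσsort i) (hσpos i)
          (by rw [hτsum, hσsum]) (hdom i).1 (hdom i).2 h)
    · exact ⟨i₀, Finset.mem_univ i₀, key_strict (hτsort i₀) (hσsort i₀) (hσpos i₀)
        (by rw [hτsum, hσsum]) (hdom i₀).1 (hdom i₀).2 hi₀⟩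
  exact absurd hsq (ne_of_gt hlt)
end

section
/- Let R be a Noetherian local ring and M a nonzero finitely generated R-module, and suppose there is a finite local homomorphism S → R of Noetherian local rings (so R is a finite S-module and the maximal ideal of S maps into that of R). Then depth_R(M) = depth_S(M), where M is viewed as an S-module via the homomorphism. -/
open Submodule


section AssFin
variable {R : Type*} [CommRing R] {M : Type*} [AddCommGroup M] [Module R M]

lemma ann_span_smul {p : Ideal R} (hp : p.IsPrime) {x : M}
    (hx : (R ∙ x).annihilator = p) {a : R} (ha : a • x ≠ 0) :
    (R ∙ (a • x)).annihilator = p := by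
  have haP : a ∉ p := fun h => ha (mem_annihilator_span_singleton x a |>.mp (hx ▸ h))
  ext r
  rw [mem_annihilator_span_singleton]
  constructor
  · intro h
    have : (r * a) ∈ p := by
      rw [← hx, mem_annihilator_span_singleton, mul_smul]; exact h
    exact (hp.mem_or_mem this).resolve_right haP
  · intro h
    have : r • x = 0 := mem_annihilator_span_singleton x r |>.mp (hx ▸ h)
    rw [smul_comm, this, smul_zero]

lemma ann_eq_colon (x : M) : (R ∙ x).annihilator = (⊥ : Submodule R M).colon {x} := by
  ext r
  rw [mem_annihilator_span_singleton, mem_colon_singleton, mem_bot]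

lemma IsAssociatedPrime.submodule_or_quotient [IsNoetherianRing R] {p : Ideal R}
    (hp : IsAssociatedPrime p M) (N : Submodule R M) :
    IsAssociatedPrime p N ∨ IsAssociatedPrime p (M ⧸ N) := by
  obtain ⟨hprime, x, hx⟩ := isAssociatedPrime_iff.mp hp
  rw [← ann_eq_colon] at hx
  by_cases h : ∃ a : R, a • x ∈ N ∧ a • x ≠ 0
  · left
    obtain ⟨a, haN, ha0⟩ := h
    refine isAssociatedPrime_iff.mpr ⟨hprime, ⟨a • x, haN⟩, ?_⟩
    rw [← ann_eq_colon]
    have h2 := ann_span_smul (hx ▸ hprime) hx.symm ha0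
    rw [← h2]
    ext r
    rw [mem_annihilator_span_singleton, mem_annihilator_span_singleton]
    simp [Subtype.ext_iff]
  · right
    push_neg at h
    refine isAssociatedPrime_iff.mpr ⟨hprime, Submodule.Quotient.mk x, ?_⟩
    rw [← ann_eq_colon]
    ext r
    rw [mem_annihilator_span_singleton, ← Submodule.Quotient.mk_smul,
      Submodule.Quotient.mk_eq_zero]
    constructor
    · intro hr
      have : r • x = 0 := mem_annihilator_span_singleton x r |>.mp (hx ▸ hr)
      rw [this]; exact N.zero_mem
    · intro hN
      have : r • x = 0 := h r hN
      rw [hx, mem_annihilator_span_singleton]; exact this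

end AssFin
variable {R : Type*} [CommRing R] {M : Type*} [AddCommGroup M] [Module R M]

lemma ann_span_subtype (K : Submodule R M) (y : K) :
    (R ∙ y).annihilator = (R ∙ (y : M)).annihilator := by
  ext r
  rw [mem_annihilator_span_singleton, mem_annihilator_span_singleton]
  simp [Subtype.ext_iff]

theorem associatedPrimes_finite' [IsNoetherianRing R] [Module.Finite R M] :
    ∀ N : Submodule R M, (associatedPrimes R (M ⧸ N)).Finite := by
  intro N
  induction N using IsNoetherian.induction with
  | _ N ih =>
  by_cases hN : N = ⊤
  · subst hN
    have : Subsingleton (M ⧸ (⊤ : Submodule R M)) :=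
      Submodule.Quotient.subsingleton_iff.mpr rfl
    rw [associatedPrimes.eq_empty_of_subsingleton]
    exact Set.finite_empty
  · have : Nontrivial (M ⧸ N) :=
      not_subsingleton_iff_nontrivial.mp (by rwa [Submodule.Quotient.subsingleton_iff])
    obtain ⟨p, hp⟩ := associatedPrimes.nonempty R (M ⧸ N)
    obtain ⟨hprime, xb, hx⟩ := isAssociatedPrime_iff.mp hp
    rw [← ann_eq_colon] at hx
    obtain ⟨x, rfl⟩ := Submodule.Quotient.mk_surjective N xb
    have hx0 : Submodule.Quotient.mk x ≠ (0 : M ⧸ N) := by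
      intro h0
      rw [h0] at hx
      apply hprime.ne_top
      rw [hx, Submodule.annihilator_eq_top_iff]
      simp
    have hxN : x ∉ N := fun h => hx0 ((Submodule.Quotient.mk_eq_zero N).mpr h)
    have hxmem : x ∈ N ⊔ R ∙ x := Submodule.mem_sup_right (subset_span rfl)
    have hlt : N < N ⊔ R ∙ x :=
      lt_of_le_of_ne le_sup_left fun he => hxN (by rw [he]; exact hxmem)
    have hfin := ih _ hlt
    refine Set.Finite.subset (hfin.insert p) ?_
    intro q hq
    rcases IsAssociatedPrime.submodule_or_quotient hq (R ∙ (Submodule.Quotient.mk x : M ⧸ N))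
      with h1 | h2
    · left
      obtain ⟨qpr, y, hy⟩ := isAssociatedPrime_iff.mp h1
      rw [← ann_eq_colon] at hy
      obtain ⟨a, hay⟩ := mem_span_singleton.mp y.2
      have hy0 : (y : M ⧸ N) ≠ 0 := by
        intro h0
        apply qpr.ne_top
        rw [hy, ann_span_subtype]
        rw [h0, Submodule.annihilator_eq_top_iff]
        simp
      rw [hy, ann_span_subtype, ← hay]
      exact ann_span_smul (hx ▸ hprime) hx.symm (hay ▸ hy0)
    · right
      have hmap : (R ∙ (Submodule.Quotient.mk x : M ⧸ N)) = (N ⊔ R ∙ x).map N.mkQ := by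
        rw [Submodule.map_sup, Submodule.map_span]
        simp [Submodule.mkQ_map_self]
      rw [hmap] at h2
      have e := Submodule.quotientQuotientEquivQuotient N (N ⊔ R ∙ x) le_sup_left
      rw [← LinearEquiv.AssociatedPrimes.eq e]
      exact h2

theorem associatedPrimes_finite (R M : Type*) [CommRing R] [IsNoetherianRing R]
    [AddCommGroup M] [Module R M] [Module.Finite R M] :
    (associatedPrimes R M).Finite := by
  have h := associatedPrimes_finite' (R := R) (M := M) ⊥
  rwa [LinearEquiv.AssociatedPrimes.eq (Submodule.quotEquivOfEqBot (⊥ : Submodule R M) rfl)] at h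
variable {R : Type*} [CommRing R] {M : Type*} [AddCommGroup M] [Module R M]

lemma exists_associatedPrime_of_not_isSMulRegular [IsNoetherianRing R] {z : R}
    (h : ¬ IsSMulRegular M z) : ∃ p ∈ associatedPrimes R M, z ∈ p := by
  have hex : ∃ w : M, w ≠ 0 ∧ z • w = 0 := by
    rw [IsSMulRegular, Function.Injective] at h
    push_neg at h
    obtain ⟨a, b, hab, hne⟩ := h
    exact ⟨a - b, sub_ne_zero.mpr hne, by rw [smul_sub, hab, sub_self]⟩
  obtain ⟨w, hw, hzw⟩ := hex
  obtain ⟨p, hp, hle⟩ := exists_le_isAssociatedPrime_of_isNoetherianRing R w hw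
  exact ⟨p, hp, hle (by rw [← ann_eq_colon]; exact mem_annihilator_span_singleton w z |>.mpr hzw)⟩

lemma IsAssociatedPrime.not_mem_of_regular [IsNoetherianRing R] {p : Ideal R} (hp : IsAssociatedPrime p M)
    {x : R} (hx : IsSMulRegular M x) : x ∉ p := by
  obtain ⟨hpr, w, hw⟩ := isAssociatedPrime_iff.mp hp
  rw [← ann_eq_colon] at hw
  intro hxp
  have h0 : x • w = 0 := mem_annihilator_span_singleton w x |>.mp (hw ▸ hxp)
  have hw0 : w = 0 := hx (by simpa using h0)
  apply hpr.ne_top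
  rw [hw, hw0, Submodule.annihilator_eq_top_iff]
  simp

lemma exists_mem_maximalIdeal_notMem {A : Type*} [CommRing A] [IsLocalRing A]
    {P : Set (Ideal A)} (hfin : P.Finite) (hprime : ∀ p ∈ P, p.IsPrime)
    (hne : ∀ p ∈ P, ¬ (IsLocalRing.maximalIdeal A ≤ p)) :
    ∃ z ∈ IsLocalRing.maximalIdeal A, ∀ p ∈ P, z ∉ p := by
  by_contra hc
  push_neg at hc
  have hsub : (IsLocalRing.maximalIdeal A : Set A) ⊆
      ⋃ p ∈ (↑hfin.toFinset : Set (Ideal A)), (p : Set A) := by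
    intro z hz
    obtain ⟨p, hpP, hzp⟩ := hc z hz
    exact Set.mem_biUnion (hfin.mem_toFinset.mpr hpP) hzp
  rw [Ideal.subset_union_prime (⊥ : Ideal A) (⊥ : Ideal A)
    (fun p hp _ _ => hprime p (hfin.mem_toFinset.mp hp))] at hsub
  obtain ⟨p, hpP, hle⟩ := hsub
  exact hne p (hfin.mem_toFinset.mp hpP) hle
open Submodule RingTheory.Sequence IsLocalRing
open scoped Pointwise

lemma mem_smul_top_iff_exists {A M : Type*} [CommRing A] [AddCommGroup M] [Module A M]
    {r : A} {x : M} : x ∈ r • (⊤ : Submodule A M) ↔ ∃ m : M, r • m = x := by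
  rw [← SetLike.mem_coe, coe_pointwise_smul]
  constructor
  · rintro ⟨m, -, rfl⟩; exact ⟨m, rfl⟩
  · rintro ⟨m, rfl⟩; exact ⟨m, trivial, rfl⟩

lemma isWeaklyRegular_of_subsingleton {A M : Type*} [CommRing A] [AddCommGroup M]
    [Module A M] [Subsingleton M] (rs : List A) :
    IsWeaklyRegular M rs :=
  ⟨fun i h => by
    have : Subsingleton (M ⧸ (Ideal.ofList (rs.take i) • ⊤ : Submodule A M)) :=
      (Submodule.Quotient.mk_surjective _).subsingleton
    exact fun a b _ => Subsingleton.elim a b⟩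

lemma maximalIdeal_not_le_ass_quot_smul {A : Type} [CommRing A] [IsNoetherianRing A] [IsLocalRing A]
    {M : Type} [AddCommGroup M] [Module A M] {x1 x2 y : A}
    (hx1 : IsSMulRegular M x1) (hx2 : IsSMulRegular (QuotSMulTop x1 M) x2)
    (hy : IsSMulRegular M y) (hx1m : x1 ∈ maximalIdeal A) (hx2m : x2 ∈ maximalIdeal A)
    {p : Ideal A} (hp : IsAssociatedPrime p (QuotSMulTop y M)) :
    ¬ maximalIdeal A ≤ p := by
  intro hle
  obtain ⟨hpr, wb, hw⟩ := isAssociatedPrime_iff.mp hp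
  rw [← ann_eq_colon] at hw
  obtain ⟨w, rfl⟩ := Submodule.Quotient.mk_surjective _ wb
  have hw0 : (Submodule.Quotient.mk w : QuotSMulTop y M) ≠ 0 := by
    intro h0
    apply hpr.ne_top
    rw [hw, h0, Submodule.annihilator_eq_top_iff]
    simp
  have hmem : ∀ c : A, c ∈ maximalIdeal A → ∃ u : M, y • u = c • w := by
    intro c hc
    have : c • (Submodule.Quotient.mk w : QuotSMulTop y M) = 0 :=
      mem_annihilator_span_singleton _ c |>.mp (hw ▸ hle hc)
    rw [← Submodule.Quotient.mk_smul, Submodule.Quotient.mk_eq_zero] at this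
    exact mem_smul_top_iff_exists.mp this
  obtain ⟨u, hu⟩ := hmem x1 hx1m
  obtain ⟨v, hv⟩ := hmem x2 hx2m
  have key : x2 • u = x1 • v := by
    apply hy
    show y • (x2 • u) = y • (x1 • v)
    rw [smul_comm y x2, hu, smul_comm y x1, hv, smul_comm x2 x1]
  have hu0 : (Submodule.Quotient.mk u : QuotSMulTop x1 M) = 0 := by
    apply hx2
    show x2 • (Submodule.Quotient.mk u : QuotSMulTop x1 M) = x2 • 0
    rw [smul_zero, ← Submodule.Quotient.mk_smul, Submodule.Quotient.mk_eq_zero, key]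
    exact mem_smul_top_iff_exists.mpr ⟨v, rfl⟩
  rw [Submodule.Quotient.mk_eq_zero] at hu0
  obtain ⟨t, ht⟩ := mem_smul_top_iff_exists.mp hu0
  have : w = y • t := by
    apply hx1
    show x1 • w = x1 • (y • t)
    rw [← hu, ← ht, smul_comm x1 y]
  apply hw0
  rw [Submodule.Quotient.mk_eq_zero]
  exact mem_smul_top_iff_exists.mpr ⟨t, this.symm⟩
lemma exchange {A : Type} [CommRing A] [IsNoetherianRing A] [IsLocalRing A] :
    ∀ (n : ℕ) (M : Type) [AddCommGroup M] [Module A M] [Module.Finite A M]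
      (xs : List A), xs.length = n → (∀ x ∈ xs, x ∈ maximalIdeal A) →
      IsWeaklyRegular M xs → ∀ y ∈ maximalIdeal A, IsSMulRegular M y →
      ∃ zs : List A, zs.length = n - 1 ∧ (∀ z ∈ zs, z ∈ maximalIdeal A) ∧
        IsWeaklyRegular M (y :: zs) := by
  intro n
  induction n with
  | zero =>
    intro M _ _ _ xs _ _ _ y _ hyreg
    exact ⟨[], rfl, by simp, (isWeaklyRegular_singleton_iff M y).mpr hyreg⟩
  | succ n ih =>
    intro M _ _ _ xs hlen hmem hreg y hym hyreg
    match xs, hlen with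
    | x1 :: rest, hlen =>
    match rest, hlen with
    | [], hlen =>
      have hn : n = 0 := by simpa using hlen.symm
      exact ⟨[], by simp [hn], by simp, (isWeaklyRegular_singleton_iff M y).mpr hyreg⟩
    | x2 :: rest', hlen =>
    have hlen2 : (x2 :: rest').length = n := by simpa using hlen
    have hn1 : 1 ≤ n := by simp at hlen2; omega
    by_cases hsub : Subsingleton M
    · refine ⟨List.replicate n 0, by simp, ?_, isWeaklyRegular_of_subsingleton _⟩
      intro z hz
      rw [List.eq_of_mem_replicate hz]
      exact zero_mem _
    · have hnt : Nontrivial M := not_subsingleton_iff_nontrivial.mp hsub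
      rw [isWeaklyRegular_cons_iff] at hreg
      obtain ⟨hx1reg, hrest⟩ := hreg
      have hx2reg : IsSMulRegular (QuotSMulTop x1 M) x2 :=
        ((isWeaklyRegular_cons_iff _ _ _).mp hrest).1
      have hx1m : x1 ∈ maximalIdeal A := hmem x1 (by simp)
      have hx2m : x2 ∈ maximalIdeal A := hmem x2 (by simp)
      -- choose z avoiding associated primes of M, M/x1M, M/yM
      set P : Set (Ideal A) := associatedPrimes A M ∪ associatedPrimes A (QuotSMulTop x1 M)
        ∪ associatedPrimes A (QuotSMulTop y M) with hP
      have hPfin : P.Finite :=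
        ((associatedPrimes_finite A M).union (associatedPrimes_finite A _)).union
          (associatedPrimes_finite A _)
      have hPprime : ∀ p ∈ P, p.IsPrime := by
        rintro p ((hp | hp) | hp) <;> exact hp.isPrime
      have hPne : ∀ p ∈ P, ¬ maximalIdeal A ≤ p := by
        rintro p ((hp | hp) | hp)
        · exact fun hle => hp.not_mem_of_regular hx1reg (hle hx1m)
        · exact fun hle => hp.not_mem_of_regular hx2reg (hle hx2m)
        · exact maximalIdeal_not_le_ass_quot_smul hx1reg hx2reg hyreg hx1m hx2m hp
      obtain ⟨z, hzm, hznotin⟩ := exists_mem_maximalIdeal_notMem hPfin hPprime hPne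
      have hz1 : IsSMulRegular M z := by
        by_contra h
        obtain ⟨p, hp, hzp⟩ := exists_associatedPrime_of_not_isSMulRegular h
        exact hznotin p (Or.inl (Or.inl hp)) hzp
      have hz2 : IsSMulRegular (QuotSMulTop x1 M) z := by
        by_contra h
        obtain ⟨p, hp, hzp⟩ := exists_associatedPrime_of_not_isSMulRegular h
        exact hznotin p (Or.inl (Or.inr hp)) hzp
      have hz3 : IsSMulRegular (QuotSMulTop y M) z := by
        by_contra h
        obtain ⟨p, hp, hzp⟩ := exists_associatedPrime_of_not_isSMulRegular h
        exact hznotin p (Or.inr hp) hzp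
      -- first application of ih : to M/x1M with x2::rest' and z
      obtain ⟨ws, hwslen, hwsmem, hws⟩ := ih (QuotSMulTop x1 M) (x2 :: rest') hlen2
        (fun x hx => hmem x (List.mem_cons_of_mem x1 hx)) hrest z hzm hz2
      have hreg1 : IsWeaklyRegular M (x1 :: z :: ws) :=
        (isWeaklyRegular_cons_iff _ _ _).mpr ⟨hx1reg, hws⟩
      have hmem1 : ∀ r ∈ x1 :: z :: ws, r ∈ maximalIdeal A := by
        intro r hr
        rcases hr with _ | ⟨_, hr⟩
        · exact hx1m
        · rcases hr with _ | ⟨_, hr⟩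
          · exact hzm
          · exact hwsmem r hr
      have hperm1 : IsWeaklyRegular M (z :: x1 :: ws) :=
        IsLocalRing.isWeaklyRegular_of_perm_of_subset_maximalIdeal hreg1
          (List.Perm.swap z x1 ws) hmem1
      have h2 : IsWeaklyRegular (QuotSMulTop z M) (x1 :: ws) :=
        ((isWeaklyRegular_cons_iff _ _ _).mp hperm1).2
      -- y is regular on M/zM
      have hyz : IsSMulRegular (QuotSMulTop z M) y := by
        have hyzreg : IsWeaklyRegular M [y, z] :=
          (isWeaklyRegular_cons_iff _ _ _).mpr
            ⟨hyreg, (isWeaklyRegular_singleton_iff _ z).mpr hz3⟩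
        have : IsWeaklyRegular M [z, y] :=
          IsLocalRing.isWeaklyRegular_of_perm_of_subset_maximalIdeal hyzreg
            (List.Perm.swap z y []) (by
              intro r hr
              rcases hr with _ | ⟨_, hr⟩
              · exact hym
              · rcases hr with _ | ⟨_, hr⟩
                · exact hzm
                · exact absurd hr List.not_mem_nil)
        have := ((isWeaklyRegular_cons_iff _ _ _).mp this).2
        exact ((isWeaklyRegular_singleton_iff _ y).mp this)
      -- second application of ih : to M/zM with x1::ws and y
      obtain ⟨vs, hvslen, hvsmem, hvs⟩ := ih (QuotSMulTop z M) (x1 :: ws)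
        (by simp only [List.length_cons, hwslen]; omega)
        (by
          intro r hr
          rcases hr with _ | ⟨_, hr⟩
          · exact hx1m
          · exact hwsmem r hr) h2 y hym hyz
      have hfin : IsWeaklyRegular M (z :: y :: vs) :=
        (isWeaklyRegular_cons_iff _ _ _).mpr ⟨hz1, hvs⟩
      have hfin2 : IsWeaklyRegular M (y :: z :: vs) :=
        IsLocalRing.isWeaklyRegular_of_perm_of_subset_maximalIdeal hfin
          (List.Perm.swap y z vs) (by
            intro r hr
            rcases hr with _ | ⟨_, hr⟩
            · exact hzm
            · rcases hr with _ | ⟨_, hr⟩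
              · exact hym
              · exact hvsmem r hr)
      refine ⟨z :: vs, by simp only [List.length_cons, hvslen]; omega, ?_, hfin2⟩
      intro r hr
      rcases hr with _ | ⟨_, hr⟩
      · exact hzm
      · exact hvsmem r hr
section Descend
variable {S R : Type} [CommRing S] [CommRing R]
    [IsNoetherianRing S] [IsNoetherianRing R] [IsLocalRing S] [IsLocalRing R]
    [Algebra S R] [Module.Finite S R] (hloc : IsLocalHom (algebraMap S R))

include hloc in
lemma descend :
    ∀ (n : ℕ) (M : Type) [AddCommGroup M] [Module R M] [Module S M]
      [IsScalarTower S R M] [Module.Finite R M]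
      (xs : List R), xs.length = n → (∀ x ∈ xs, x ∈ maximalIdeal R) →
      IsWeaklyRegular M xs →
      ∃ ys : List S, ys.length = n ∧ (∀ y ∈ ys, y ∈ maximalIdeal S) ∧
        IsWeaklyRegular M (ys.map (algebraMap S R)) := by
  intro n
  induction n with
  | zero =>
    intro M _ _ _ _ _ xs _ _ _
    exact ⟨[], rfl, by simp, by simp⟩
  | succ n ih =>
    intro M _ _ _ _ _ xs hlen hmem hreg
    match xs, hlen with
    | x1 :: rest, hlen =>
    by_cases hsub : Subsingleton M
    · refine ⟨List.replicate (n+1) 0, by simp, ?_, isWeaklyRegular_of_subsingleton _⟩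
      intro y hy
      rw [List.eq_of_mem_replicate hy]
      exact zero_mem _
    · have hnt : Nontrivial M := not_subsingleton_iff_nontrivial.mp hsub
      rw [isWeaklyRegular_cons_iff] at hreg
      obtain ⟨hx1reg, hrest⟩ := hreg
      have hx1m : x1 ∈ maximalIdeal R := hmem x1 (by simp)
      haveI := Algebra.IsIntegral.of_finite S R
      set P : Set (Ideal S) := (fun p => p.comap (algebraMap S R)) '' associatedPrimes R M
        with hP
      have hPfin : P.Finite := (associatedPrimes_finite R M).image _
      have hPprime : ∀ q ∈ P, q.IsPrime := by
        rintro q ⟨p, hp, rfl⟩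
        haveI := hp.isPrime
        exact Ideal.IsPrime.comap _
      have hPne : ∀ q ∈ P, ¬ maximalIdeal S ≤ q := by
        rintro q ⟨p, hp, rfl⟩ hle
        haveI hpp := hp.isPrime
        have hq : p.comap (algebraMap S R) = maximalIdeal S :=
          le_antisymm (IsLocalRing.le_maximalIdeal (Ideal.comap_ne_top _ hpp.ne_top)) hle
        haveI : p.IsMaximal :=
          Ideal.isMaximal_of_isIntegral_of_isMaximal_comap p
            (hq ▸ IsLocalRing.maximalIdeal.isMaximal S)
        have hpm : p = maximalIdeal R := IsLocalRing.eq_maximalIdeal this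
        exact hp.not_mem_of_regular hx1reg (hpm ▸ hx1m)
      obtain ⟨y, hym, hynotin⟩ := exists_mem_maximalIdeal_notMem hPfin hPprime hPne
      have hayreg : IsSMulRegular M (algebraMap S R y) := by
        by_contra h
        obtain ⟨p, hp, hyp⟩ := exists_associatedPrime_of_not_isSMulRegular h
        exact hynotin (p.comap (algebraMap S R)) ⟨p, hp, rfl⟩ hyp
      have haym : algebraMap S R y ∈ maximalIdeal R := by
        rw [IsLocalRing.mem_maximalIdeal, mem_nonunits_iff]
        exact fun h => (IsLocalRing.mem_maximalIdeal y).mp hym (hloc.map_nonunit y h)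
      obtain ⟨zs, hzslen, hzsmem, hzs⟩ := exchange (n+1) M (x1 :: rest) hlen hmem
        ((isWeaklyRegular_cons_iff _ _ _).mpr ⟨hx1reg, hrest⟩) (algebraMap S R y) haym hayreg
      rw [isWeaklyRegular_cons_iff] at hzs
      obtain ⟨-, hzs⟩ := hzs
      obtain ⟨ys', hys'len, hys'mem, hys'⟩ := ih (QuotSMulTop (algebraMap S R y) M) zs
        (by simpa using hzslen) hzsmem hzs
      refine ⟨y :: ys', by simp [hys'len], ?_, ?_⟩
      · intro r hr
        rcases hr with _ | ⟨_, hr⟩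
        · exact hym
        · exact hys'mem r hr
      · rw [List.map_cons, isWeaklyRegular_cons_iff]
        exact ⟨hayreg, hys'⟩

end Descend
/-- The depth of a module over a Noetherian local ring `A`: the supremum of
the lengths of `M`-regular sequences contained in the maximal ideal of `A`
(this is the length of a maximal `M`-regular sequence). -/
noncomputable def localDepth (A : Type) [CommRing A] [IsLocalRing A]
    (M : Type) [AddCommGroup M] [Module A M] : ℕ∞ :=
  sSup {d : ℕ∞ | ∃ rs : List A,
    (∀ r ∈ rs, r ∈ IsLocalRing.maximalIdeal A) ∧
    RingTheory.Sequence.IsRegular M rs ∧ (rs.length : ℕ∞) = d}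

/-- If `S → R` is a finite local homomorphism of Noetherian local rings and
`M` is a nonzero finitely generated `R`-module, then the depth of `M` over `R`
equals its depth over `S`. -/
theorem stmt_15 (S R : Type) [CommRing S] [CommRing R]
    [IsNoetherianRing S] [IsNoetherianRing R] [IsLocalRing S] [IsLocalRing R]
    [Algebra S R] [Module.Finite S R] (hloc : IsLocalHom (algebraMap S R))
    (M : Type) [AddCommGroup M] [Module R M] [Module S M] [IsScalarTower S R M]
    [Module.Finite R M] [Nontrivial M] :
    localDepth R M = localDepth S M := by
  haveI : Module.Finite S M := Module.Finite.trans R M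
  unfold localDepth
  congr 1
  ext d
  simp only [Set.mem_setOf_eq]
  constructor
  · rintro ⟨rs, hmem, hreg, hlen⟩
    have hw : IsWeaklyRegular M rs :=
      (IsLocalRing.isRegular_iff_isWeaklyRegular_of_subset_maximalIdeal hmem).mp hreg
    obtain ⟨ys, hyslen, hysmem, hysreg⟩ := descend hloc rs.length M rs rfl hmem hw
    refine ⟨ys, hysmem, ?_, by rw [hyslen]; exact hlen⟩
    rw [IsLocalRing.isRegular_iff_isWeaklyRegular_of_subset_maximalIdeal hysmem]
    exact (isWeaklyRegular_map_algebraMap_iff (R := S) (S := R) (M := M) ys).mp hysreg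
  · rintro ⟨ys, hmem, hreg, hlen⟩
    have hw : IsWeaklyRegular M ys :=
      (IsLocalRing.isRegular_iff_isWeaklyRegular_of_subset_maximalIdeal hmem).mp hreg
    refine ⟨ys.map (algebraMap S R), ?_, ?_, by simpa using hlen⟩
    · intro r hr
      obtain ⟨y, hy, rfl⟩ := List.mem_map.mp hr
      rw [IsLocalRing.mem_maximalIdeal, mem_nonunits_iff]
      exact fun h => (IsLocalRing.mem_maximalIdeal y).mp (hmem y hy) (hloc.map_nonunit y h)
    · rw [IsLocalRing.isRegular_iff_isWeaklyRegular_of_subset_maximalIdeal (by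
        intro r hr
        obtain ⟨y, hy, rfl⟩ := List.mem_map.mp hr
        rw [IsLocalRing.mem_maximalIdeal, mem_nonunits_iff]
        exact fun h => (IsLocalRing.mem_maximalIdeal y).mp (hmem y hy) (hloc.map_nonunit y h))]
      exact (isWeaklyRegular_map_algebraMap_iff (R := S) (S := R) (M := M) ys).mpr hw
end
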